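/- If P is an s×s real matrix whose eigenvalues are 1, λ₂, …, λ_s with |λ_i| < 1 for i = 2,…,s, and d is a vector with P^j d = 0 for all j ≥ s−1, then d lies in the range of I − P. -/

import Mathlib

open Matrix

/-- If P is an s×s real matrix whose eigenvalues are 1, λ₂, …, λ_s with |λ_i| < 1,
and d is a vector with P^j d = 0 for all j ≥ s−1, then d lies in the range of I − P. -/
theorem stmt_0 {s : ℕ} (P : Matrix (Fin s) (Fin s) ℝ) (d : Fin s → ℝ)
    (lam : Multiset ℂ)
    (heig : (P.map (Complex.ofReal)).charpoly.roots = 1 ::ₘ lam)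
    (hlam : ∀ μ ∈ lam, ‖μ‖ < 1)
    (hpow : ∀ j : ℕ, s - 1 ≤ j → (P ^ j) *ᵥ d = 0) :
    ∃ x : Fin s → ℝ, ((1 : Matrix (Fin s) (Fin s) ℝ) - P) *ᵥ x = d := by
  refine ⟨(∑ j ∈ Finset.range (s - 1), P ^ j) *ᵥ d, ?_⟩
  have h := hpow (s - 1) le_rfl
  have key : ((1 : Matrix (Fin s) (Fin s) ℝ) - P) * ∑ j ∈ Finset.range (s - 1), P ^ j
      = 1 - P ^ (s - 1) := by
    rw [← neg_sub P 1, neg_mul, mul_geom_sum, neg_sub]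
  rw [mulVec_mulVec, key, sub_mulVec, one_mulVec, h, sub_zero]
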